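/- Under Hypothesis f_p (conditions (i)-(ii)) with Ω ⊂ ℝⁿ a bounded Sobolev domain and p ∈ [2,∞), there are continuous positive nondecreasing functions g_4, g_5 : [0,∞) → ℝ such that for all (x, ξ): if |α| < m - n/p then |f_α(x,ξ)| ≤ |f_α(x,0)| + g_5(|ξ_∘|)(1 + Σ_{m-n/p ≤ |γ| ≤ m} |ξ_γ|^{p_γ}), and if m - n/p ≤ |α| ≤ m then |f_α(x,ξ)| ≤ |f_α(x,0)| + g_5(|ξ_∘|) + g_5(|ξ_∘|)(Σ_{m-n/p ≤ |γ| ≤ m} |ξ_γ|^{p_γ})^{1/q_α}. -/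

import Mathlib

open Filter Topology MeasureTheory

/-- The Euclidean norm `|ξ_∘|` of the low-order part of a jet variable `ξ`. -/
noncomputable def lowNorm {ι : Type} [Fintype ι] (deg : ι → ℕ) (m n : ℕ) (p : ℝ)
    (ξ : ι → ℝ) : ℝ :=
  Real.sqrt (∑ a ∈ Finset.univ.filter (fun a : ι => (deg a : ℝ) < (m : ℝ) - n / p),
    (ξ a) ^ 2)

/-- The quantity `Σ_{m-n/p ≤ |γ| ≤ m} |ξ_γ|^{p_γ}`. -/
noncomputable def highSum {ι : Type} [Fintype ι] (deg : ι → ℕ) (m n : ℕ) (p : ℝ)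
    (pe : ι → ℝ) (ξ : ι → ℝ) : ℝ :=
  ∑ γ ∈ Finset.univ.filter (fun γ : ι => (m : ℝ) - n / p ≤ (deg γ : ℝ)), |ξ γ| ^ pe γ

lemma aux_one_add_rpow_le {H r : ℝ} (hH : 0 ≤ H) (hr : 0 < r) (hr1 : r ≤ 1) :
    (1 + H) ^ r ≤ 1 + H ^ r := by
  lift H to NNReal using hH
  have hp1 : 1 ≤ 1 / r := (le_div_iff₀ hr).2 (by linarith)
  have h := NNReal.rpow_add_rpow_le_add 1 (H ^ r) hp1
  rw [NNReal.one_rpow, ← NNReal.rpow_mul, one_div_one_div, mul_one_div,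
    div_self hr.ne', NNReal.rpow_one] at h
  have h2 := NNReal.coe_le_coe.2 h
  push_cast at h2
  exact h2
/-- Under Hypothesis `f_p` (conditions (i)-(ii)), there are continuous positive
nondecreasing functions `g₄, g₅` such that for all `(x, ξ)`:
if `|α| < m - n/p` then
`|f_α(x,ξ)| ≤ |f_α(x,0)| + g₅(|ξ_∘|)(1 + Σ_{m-n/p ≤ |γ| ≤ m}|ξ_γ|^{p_γ})`, and if
`m - n/p ≤ |α| ≤ m` then
`|f_α(x,ξ)| ≤ |f_α(x,0)| + g₅(|ξ_∘|) + g₅(|ξ_∘|)(Σ_{m-n/p ≤ |γ| ≤ m}|ξ_γ|^{p_γ})^{1/q_α}`.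
Here multi-indices `α` of length `|α| ≤ m` are modelled by an abstract finite index type
`ι` with a degree function `deg`. -/
theorem stmt_16
    (n m : ℕ) (p : ℝ) (hp : 2 ≤ p)
    (Ω : Set (EuclideanSpace ℝ (Fin n))) (hΩopen : IsOpen Ω) (hΩbd : Bornology.IsBounded Ω)
    (ι : Type) [Fintype ι] [DecidableEq ι]
    (deg : ι → ℕ) (hdeg : ∀ a, deg a ≤ m)
    (pe qe : ι → ℝ)
    (hpe1 : ∀ γ, ((deg γ : ℝ) = (m : ℝ) - n / p) → 1 < pe γ)
    (hpe2 : ∀ γ, ((m : ℝ) - n / p < (deg γ : ℝ)) →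
      pe γ = n * p / (n - ((m : ℝ) - deg γ) * p))
    (hqe1 : ∀ γ, ((deg γ : ℝ) < (m : ℝ) - n / p) → qe γ = 1)
    (hqe2 : ∀ γ, ((m : ℝ) - n / p ≤ (deg γ : ℝ)) → qe γ = pe γ / (pe γ - 1))
    (pab : ι → ι → ℝ) (hpabsymm : ∀ α β, pab α β = pab β α)
    (hpab1 : ∀ α β, deg α = m → deg β = m → pab α β = 1 - 1 / pe α - 1 / pe β)
    (hpab2 : ∀ α β, ((m : ℝ) - n / p ≤ (deg α : ℝ)) → ((deg β : ℝ) < (m : ℝ) - n / p) →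
      pab α β = 1 - 1 / pe α)
    (hpab3 : ∀ α β, ((deg α : ℝ) < (m : ℝ) - n / p) → ((deg β : ℝ) < (m : ℝ) - n / p) →
      pab α β = 1)
    (hpab4 : ∀ α β, ((m : ℝ) - n / p ≤ (deg α : ℝ)) → ((m : ℝ) - n / p ≤ (deg β : ℝ)) →
      deg α + deg β < 2 * m → 0 < pab α β ∧ pab α β < 1 - 1 / pe α - 1 / pe β)
    (f : EuclideanSpace ℝ (Fin n) → (ι → ℝ) → ℝ)
    (fα : EuclideanSpace ℝ (Fin n) → (ι → ℝ) → ι → ℝ)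
    (fαβ : EuclideanSpace ℝ (Fin n) → (ι → ℝ) → ι → ι → ℝ)
    -- Carathéodory condition: measurability in `x`
    (hmeasf : ∀ ξ, Measurable fun x => f x ξ)
    (hmeasfα : ∀ ξ α, Measurable fun x => fα x ξ α)
    -- (i): `f(x,·)` is twice continuously differentiable with partials `fα`, `fαβ`,
    -- and the integrability conditions at `ξ = 0`
    (hf0 : ∀ x ∈ closure Ω, ∀ ξ : ι → ℝ,
      HasFDerivAt (f x)
        (∑ α : ι, fα x ξ α • (ContinuousLinearMap.proj α : (ι → ℝ) →L[ℝ] ℝ)) ξ)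
    (hf1 : ∀ x ∈ closure Ω, ∀ ξ : ι → ℝ, ∀ α : ι,
      HasFDerivAt (fun ζ => fα x ζ α)
        (∑ β : ι, fαβ x ξ α β • (ContinuousLinearMap.proj β : (ι → ℝ) →L[ℝ] ℝ)) ξ)
    (hf2 : ∀ x ∈ closure Ω, ∀ α β : ι, Continuous fun ξ : ι → ℝ => fαβ x ξ α β)
    (hfL1 : IntegrableOn (fun x => f x 0) Ω)
    (hfαL1 : ∀ α, ((deg α : ℝ) < (m : ℝ) - n / p) → IntegrableOn (fun x => fα x 0 α) Ω)
    (hfαLq : ∀ α, ((m : ℝ) - n / p ≤ (deg α : ℝ)) →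
      MemLp (fun x => fα x 0 α) (ENNReal.ofReal (qe α)) (volume.restrict Ω))
    -- (ii): the growth condition (1.5) on the second partial derivatives
    (g₁ : ℝ → ℝ) (hg₁c : Continuous g₁) (hg₁pos : ∀ t, 0 < g₁ t) (hg₁mono : Monotone g₁)
    (hgrowth : ∀ x ∈ closure Ω, ∀ ξ : ι → ℝ, ∀ α β : ι,
      |fαβ x ξ α β| ≤ g₁ (lowNorm deg m n p ξ) * (1 + highSum deg m n p pe ξ) ^ pab α β) :
    ∃ g₄ g₅ : ℝ → ℝ,
      (Continuous g₄ ∧ (∀ t, 0 < g₄ t) ∧ Monotone g₄) ∧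
      (Continuous g₅ ∧ (∀ t, 0 < g₅ t) ∧ Monotone g₅) ∧
      ∀ x ∈ closure Ω, ∀ ξ : ι → ℝ, ∀ α : ι,
        (((deg α : ℝ) < (m : ℝ) - n / p) →
          |fα x ξ α| ≤ |fα x 0 α| +
            g₅ (lowNorm deg m n p ξ) * (1 + highSum deg m n p pe ξ)) ∧
        (((m : ℝ) - n / p ≤ (deg α : ℝ)) →
          |fα x ξ α| ≤ |fα x 0 α| + g₅ (lowNorm deg m n p ξ) +
            g₅ (lowNorm deg m n p ξ) * (highSum deg m n p pe ξ) ^ (1 / qe α)) := by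
  classical
  have hp0 : (0:ℝ) < p := lt_of_lt_of_le two_pos hp
  -- pe > 1 on the high range
  have hpegt : ∀ γ : ι, (m:ℝ) - n / p ≤ (deg γ : ℝ) → 1 < pe γ := by
    intro γ hγ
    rcases eq_or_lt_of_le hγ with h | h
    · exact hpe1 γ h.symm
    · have hd : (deg γ : ℝ) ≤ (m:ℝ) := Nat.cast_le.2 (hdeg γ)
      have h1 : ((m:ℝ) - deg γ) * p < n := by
        have h2 : (m:ℝ) - deg γ < n / p := by linarith
        calc ((m:ℝ) - deg γ) * p < (n/p) * p := mul_lt_mul_of_pos_right h2 hp0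
          _ = n := by field_simp
      have hn0 : (0:ℝ) < n :=
        lt_of_le_of_lt (mul_nonneg (by linarith) hp0.le) h1
      have hden : (0:ℝ) < (n:ℝ) - ((m:ℝ) - deg γ) * p := by linarith
      rw [hpe2 γ h, lt_div_iff₀ hden]
      nlinarith [mul_nonneg (sub_nonneg.2 hd) hp0.le]
  have hLnn : ∀ ξ : ι → ℝ, 0 ≤ lowNorm deg m n p ξ := fun ξ => Real.sqrt_nonneg _
  have hHnn : ∀ ξ : ι → ℝ, 0 ≤ highSum deg m n p pe ξ := by
    intro ξ
    apply Finset.sum_nonneg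
    intro γ _
    positivity
  have hterm : ∀ (ξ : ι → ℝ) (β : ι), (m:ℝ) - n/p ≤ (deg β:ℝ) →
      |ξ β| ^ pe β ≤ highSum deg m n p pe ξ := by
    intro ξ β hβ
    exact Finset.single_le_sum (f := fun γ => |ξ γ| ^ pe γ) (fun γ _ => by positivity)
      (Finset.mem_filter.2 ⟨Finset.mem_univ _, hβ⟩)
  have hlowle : ∀ (ξ : ι → ℝ) (β : ι), (deg β:ℝ) < (m:ℝ) - n/p →
      |ξ β| ≤ lowNorm deg m n p ξ := by
    intro ξ β hβ
    rw [← Real.sqrt_sq_eq_abs]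
    apply Real.sqrt_le_sqrt
    exact Finset.single_le_sum (f := fun a => ξ a ^ 2) (fun a _ => sq_nonneg _)
      (Finset.mem_filter.2 ⟨Finset.mem_univ _, hβ⟩)
  have hhighle : ∀ (ξ : ι → ℝ) (β : ι), (m:ℝ) - n/p ≤ (deg β:ℝ) →
      |ξ β| ≤ (1 + highSum deg m n p pe ξ) ^ (1 / pe β) := by
    intro ξ β hβ
    have hpb : (0:ℝ) < pe β := lt_trans one_pos (hpegt β hβ)
    have h1 : |ξ β| ^ pe β ≤ 1 + highSum deg m n p pe ξ :=
      le_trans (hterm ξ β hβ) (by linarith [hHnn ξ])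
    calc |ξ β| = (|ξ β| ^ pe β) ^ (1 / pe β) := by
          rw [← Real.rpow_mul (abs_nonneg _), mul_one_div, div_self hpb.ne', Real.rpow_one]
      _ ≤ (1 + highSum deg m n p pe ξ) ^ (1/pe β) :=
          Real.rpow_le_rpow (Real.rpow_nonneg (abs_nonneg _) _) h1
            (one_div_nonneg.2 (by linarith))
  have hlowsmul : ∀ (ξ : ι → ℝ) (t : ℝ), t ∈ Set.Icc (0:ℝ) 1 →
      lowNorm deg m n p (t • ξ) ≤ lowNorm deg m n p ξ := by
    intro ξ t ht
    apply Real.sqrt_le_sqrt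
    apply Finset.sum_le_sum
    intro a _
    have h1 : (t • ξ) a = t * ξ a := rfl
    rw [h1, mul_pow]
    have ht2 : t^2 ≤ 1 := by nlinarith [ht.1, ht.2]
    calc t^2 * ξ a^2 ≤ 1 * ξ a^2 := mul_le_mul_of_nonneg_right ht2 (sq_nonneg _)
      _ = ξ a^2 := one_mul _
  have hhighsmul : ∀ (ξ : ι → ℝ) (t : ℝ), t ∈ Set.Icc (0:ℝ) 1 →
      highSum deg m n p pe (t • ξ) ≤ highSum deg m n p pe ξ := by
    intro ξ t ht
    apply Finset.sum_le_sum
    intro γ hγ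
    have hγ' : (m:ℝ) - n/p ≤ (deg γ:ℝ) := (Finset.mem_filter.1 hγ).2
    have h1 : (t • ξ) γ = t * ξ γ := rfl
    rw [h1]
    apply Real.rpow_le_rpow (abs_nonneg _) _ (le_of_lt (lt_trans one_pos (hpegt γ hγ')))
    rw [abs_mul]
    exact mul_le_of_le_one_left (abs_nonneg _) (abs_le.2 ⟨by linarith [ht.1], ht.2⟩)
  have hpabboth : ∀ α β : ι, (m:ℝ) - n/p ≤ (deg α:ℝ) → (m:ℝ) - n/p ≤ (deg β:ℝ) →
      pab α β ≤ 1 - 1/pe α - 1/pe β := by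
    intro α β hα hβ
    by_cases hm : deg α = m ∧ deg β = m
    · rw [hpab1 α β hm.1 hm.2]
    · have h2m : deg α + deg β < 2 * m := by
        have h1 := hdeg α; have h2 := hdeg β
        omega
      exact (hpab4 α β hα hβ h2m).2.le
  set E : ι → ℝ := fun α => if (deg α : ℝ) < (m:ℝ) - n / p then 1 else 1 - 1 / pe α
    with hEdef
  -- pointwise bound on fαβ along the segment
  have hfb : ∀ x ∈ closure Ω, ∀ (ξ : ι → ℝ) (t : ℝ), t ∈ Set.Icc (0:ℝ) 1 → ∀ α β : ι,
      |fαβ x (t • ξ) α β| ≤ g₁ (lowNorm deg m n p ξ) *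
        (1 + highSum deg m n p pe (t • ξ)) ^ pab α β := by
    intro x hx ξ t ht α β
    refine (hgrowth x hx (t•ξ) α β).trans ?_
    apply mul_le_mul_of_nonneg_right (hg₁mono (hlowsmul ξ t ht))
    exact Real.rpow_nonneg (by linarith [hHnn (t•ξ)]) _
  -- the key per-pair integral estimate
  have key : ∀ α β : ι, ∃ c : ℝ, 1 ≤ c ∧ ∀ x ∈ closure Ω, ∀ ξ : ι → ℝ,
      |∫ t in (0:ℝ)..1, fαβ x (t • ξ) α β * ξ β| ≤
        c * (g₁ (lowNorm deg m n p ξ) * ((1 + lowNorm deg m n p ξ) *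
          (1 + highSum deg m n p pe ξ) ^ E α)) := by
    intro α β
    by_cases hs : 0 ≤ pab α β
    · refine ⟨1, le_refl 1, ?_⟩
      intro x hx ξ
      set L := lowNorm deg m n p ξ with hLdef
      set H := highSum deg m n p pe ξ with hHdef
      have hL : 0 ≤ L := hLnn ξ
      have hH : 0 ≤ H := hHnn ξ
      rw [one_mul]
      have hbound : ∀ t ∈ Set.uIoc (0:ℝ) 1,
          ‖fαβ x (t•ξ) α β * ξ β‖ ≤ g₁ L * ((1+L) * (1+H)^(E α)) := by
        intro t ht
        rw [Set.uIoc_of_le (by norm_num : (0:ℝ) ≤ 1)] at ht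
        have ht' : t ∈ Set.Icc (0:ℝ) 1 := ⟨ht.1.le, ht.2⟩
        have h1 : |fαβ x (t•ξ) α β| ≤ g₁ L * (1+H) ^ pab α β := by
          refine (hfb x hx ξ t ht' α β).trans ?_
          exact mul_le_mul_of_nonneg_left
            (Real.rpow_le_rpow (by linarith [hHnn (t•ξ)]) (by linarith [hhighsmul ξ t ht']) hs)
            (hg₁pos L).le
        rw [Real.norm_eq_abs, abs_mul]
        by_cases hβ : (deg β : ℝ) < (m:ℝ) - n/p
        · have hEβ : pab α β ≤ E α := by
            by_cases hα : (deg α:ℝ) < (m:ℝ) - n/p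
            · rw [hpab3 α β hα hβ]; simp [hEdef, hα]
            · rw [hpab2 α β (not_lt.1 hα) hβ]; simp [hEdef, hα]
          have h2 : (1+H)^(pab α β) ≤ (1+H)^(E α) :=
            Real.rpow_le_rpow_of_exponent_le (by linarith) hEβ
          calc |fαβ x (t•ξ) α β| * |ξ β| ≤ (g₁ L * (1+H)^(pab α β)) * L :=
                mul_le_mul h1 (hlowle ξ β hβ) (abs_nonneg _)
                  (mul_nonneg (hg₁pos L).le (Real.rpow_nonneg (by linarith) _))
            _ ≤ (g₁ L * (1+H)^(E α)) * (1+L) := by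
                apply mul_le_mul (mul_le_mul_of_nonneg_left h2 (hg₁pos L).le)
                  (by linarith) hL
                exact mul_nonneg (hg₁pos L).le (Real.rpow_nonneg (by linarith) _)
            _ = g₁ L * ((1+L) * (1+H)^(E α)) := by ring
        · have hβ' := not_lt.1 hβ
          have hpb := hpegt β hβ'
          have hsum : pab α β + 1/pe β ≤ E α := by
            by_cases hα : (deg α:ℝ) < (m:ℝ) - n/p
            · rw [hpabsymm, hpab2 β α hβ' hα]
              simp only [hEdef, if_pos hα]
              linarith
            · have h3 := hpabboth α β (not_lt.1 hα) hβ'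
              simp only [hEdef, if_neg hα]
              linarith
          calc |fαβ x (t•ξ) α β| * |ξ β| ≤ (g₁ L * (1+H)^(pab α β)) * (1+H)^(1/pe β) :=
                mul_le_mul h1 (hhighle ξ β hβ') (abs_nonneg _)
                  (mul_nonneg (hg₁pos L).le (Real.rpow_nonneg (by linarith) _))
            _ = g₁ L * (1+H)^(pab α β + 1/pe β) := by
                rw [Real.rpow_add (by linarith : (0:ℝ) < 1 + H)]; ring
            _ ≤ g₁ L * (1+H)^(E α) := mul_le_mul_of_nonneg_left
                (Real.rpow_le_rpow_of_exponent_le (by linarith) hsum) (hg₁pos L).le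
            _ ≤ g₁ L * ((1+L)*(1+H)^(E α)) := by
                have h4 : (0:ℝ) ≤ (1+H)^(E α) := Real.rpow_nonneg (by linarith) _
                have h5 := le_mul_of_one_le_right
                  (mul_nonneg (hg₁pos L).le h4) (by linarith : (1:ℝ) ≤ 1+L)
                calc g₁ L * (1+H)^(E α) ≤ g₁ L * (1+H)^(E α) * (1+L) := h5
                  _ = g₁ L * ((1+L)*(1+H)^(E α)) := by ring
      calc |∫ t in (0:ℝ)..1, fαβ x (t•ξ) α β * ξ β|
          ≤ (g₁ L * ((1+L)*(1+H)^(E α))) * |1 - 0| := by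
            rw [← Real.norm_eq_abs]
            exact intervalIntegral.norm_integral_le_of_norm_le_const hbound
        _ = g₁ L * ((1+L)*(1+H)^(E α)) := by norm_num
    · push_neg at hs
      have hαβ : deg α = m ∧ deg β = m := by
        by_contra hc
        apply absurd hs (not_lt.2 _)
        by_cases hα : (deg α:ℝ) < (m:ℝ) - n/p
        · by_cases hβ : (deg β:ℝ) < (m:ℝ) - n/p
          · rw [hpab3 α β hα hβ]; norm_num
          · rw [hpabsymm, hpab2 β α (not_lt.1 hβ) hα]
            have h1 := hpegt β (not_lt.1 hβ)
            have h2 : 1/pe β ≤ 1 := by rw [div_le_one (by linarith)]; linarith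
            linarith
        · by_cases hβ : (deg β:ℝ) < (m:ℝ) - n/p
          · rw [hpab2 α β (not_lt.1 hα) hβ]
            have h1 := hpegt α (not_lt.1 hα)
            have h2 : 1/pe α ≤ 1 := by rw [div_le_one (by linarith)]; linarith
            linarith
          · have h2m : deg α + deg β < 2*m := by
              have h1 := hdeg α; have h2 := hdeg β
              omega
            exact (hpab4 α β (not_lt.1 hα) (not_lt.1 hβ) h2m).1.le
      obtain ⟨hαm, hβm⟩ := hαβ
      have hnp : (0:ℝ) ≤ (n:ℝ)/p := by positivity
      have hαhigh : (m:ℝ) - n/p ≤ (deg α:ℝ) := by rw [hαm]; linarith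
      have hβhigh : (m:ℝ) - n/p ≤ (deg β:ℝ) := by rw [hβm]; linarith
      have hpa := hpegt α hαhigh
      have hpb := hpegt β hβhigh
      have hv : pab α β = 1 - 1/pe α - 1/pe β := hpab1 α β hαm hβm
      have hEα : E α = 1 - 1/pe α := by
        simp only [hEdef, if_neg (not_lt.2 hαhigh)]
      set e : ℝ := pe β * pab α β with hedef
      have hpainv : 1/pe α < 1 := by rw [div_lt_one (by linarith)]; linarith
      have he : -1 < e := by
        rw [hedef, hv]
        have h2 : pe β * (1 - 1/pe α - 1/pe β) = pe β * (1 - 1/pe α) - 1 := by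
          field_simp
        rw [h2]
        have h1 : 0 < pe β * (1 - 1/pe α) := mul_pos (by linarith) (by linarith)
        linarith
      refine ⟨max 1 (1/(e+1)), le_max_left _ _, ?_⟩
      intro x hx ξ
      set L := lowNorm deg m n p ξ with hLdef
      set H := highSum deg m n p pe ξ with hHdef
      have hL : 0 ≤ L := hLnn ξ
      have hH : 0 ≤ H := hHnn ξ
      set B := g₁ L * ((1 + L) * (1 + H) ^ E α) with hBdef
      have hHE : (0:ℝ) ≤ (1 + H) ^ E α := Real.rpow_nonneg (by linarith) _
      have hBnn : 0 ≤ B := by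
        rw [hBdef]
        exact mul_nonneg (hg₁pos L).le (mul_nonneg (by linarith) hHE)
      have hpoint : ∀ t ∈ Set.Ioc (0:ℝ) 1, |fαβ x (t•ξ) α β * ξ β| ≤ B * t ^ e := by
        intro t ht
        have ht' : t ∈ Set.Icc (0:ℝ) 1 := ⟨ht.1.le, ht.2⟩
        have htpos : 0 < t := ht.1
        set K := |ξ β| with hKdef
        have hKnn : 0 ≤ K := abs_nonneg _
        have hKH : K ^ pe β ≤ H := hterm ξ β hβhigh
        have hb1 : t ^ pe β * (1 + K ^ pe β) ≤ 1 + highSum deg m n p pe (t•ξ) := by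
          have htp1 : t ^ pe β ≤ 1 := Real.rpow_le_one htpos.le ht.2 (by linarith)
          have hterm2 : t ^ pe β * K ^ pe β ≤ highSum deg m n p pe (t•ξ) := by
            have h3 : t ^ pe β * K ^ pe β = |(t•ξ) β| ^ pe β := by
              have h4 : (t•ξ) β = t * ξ β := rfl
              rw [h4, abs_mul, Real.mul_rpow (abs_nonneg _) (abs_nonneg _),
                abs_of_pos htpos]
            rw [h3]
            exact hterm (t•ξ) β hβhigh
          have hexp2 : t ^ pe β * (1 + K ^ pe β) = t ^ pe β + t ^ pe β * K ^ pe β := by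
            ring
          rw [hexp2]
          linarith
        have hKpnn : (0:ℝ) ≤ K ^ pe β := Real.rpow_nonneg hKnn _
        have hbase_pos : (0:ℝ) < t ^ pe β * (1 + K ^ pe β) :=
          mul_pos (Real.rpow_pos_of_pos htpos _) (by linarith)
        have h2 : (1 + highSum deg m n p pe (t•ξ)) ^ pab α β ≤
            (t ^ pe β * (1 + K ^ pe β)) ^ pab α β :=
          Real.rpow_le_rpow_of_nonpos hbase_pos hb1 hs.le
        have h3 : (t ^ pe β * (1 + K ^ pe β)) ^ pab α β
            = t ^ e * (1 + K ^ pe β) ^ pab α β := by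
          rw [Real.mul_rpow (Real.rpow_nonneg htpos.le _) (by linarith),
            ← Real.rpow_mul htpos.le, hedef]
        have h4 : (1 + K ^ pe β) ^ pab α β * K ≤ (1 + H) ^ E α := by
          have hKle : K ≤ (1 + K ^ pe β) ^ (1/pe β) := by
            calc K = (K ^ pe β) ^ (1/pe β) := by
                  rw [← Real.rpow_mul hKnn, mul_one_div,
                    div_self (by linarith : pe β ≠ 0), Real.rpow_one]
              _ ≤ (1 + K ^ pe β) ^ (1/pe β) :=
                  Real.rpow_le_rpow hKpnn (by linarith)
                    (one_div_nonneg.2 (by linarith))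
          calc (1 + K ^ pe β) ^ pab α β * K
              ≤ (1 + K ^ pe β) ^ pab α β * (1 + K ^ pe β) ^ (1/pe β) :=
                mul_le_mul_of_nonneg_left hKle
                  (Real.rpow_nonneg (by linarith) _)
            _ = (1 + K ^ pe β) ^ (pab α β + 1/pe β) := by
                rw [← Real.rpow_add (by linarith : (0:ℝ) < 1 + K ^ pe β)]
            _ ≤ (1 + H) ^ E α := by
                rw [hEα, hv]
                have hexp : 1 - 1/pe α - 1/pe β + 1/pe β = 1 - 1/pe α := by ring
                rw [hexp]
                exact Real.rpow_le_rpow (by linarith) (by linarith) (by linarith)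
        rw [abs_mul]
        calc |fαβ x (t•ξ) α β| * K
            ≤ (g₁ L * (1 + highSum deg m n p pe (t•ξ)) ^ pab α β) * K :=
              mul_le_mul_of_nonneg_right (hfb x hx ξ t ht' α β) hKnn
          _ ≤ (g₁ L * (t ^ e * (1 + K ^ pe β) ^ pab α β)) * K := by
              rw [← h3]
              exact mul_le_mul_of_nonneg_right
                (mul_le_mul_of_nonneg_left h2 (hg₁pos L).le) hKnn
          _ = g₁ L * t ^ e * ((1 + K ^ pe β) ^ pab α β * K) := by ring
          _ ≤ g₁ L * t ^ e * (1 + H) ^ E α := by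
              apply mul_le_mul_of_nonneg_left h4
              exact mul_nonneg (hg₁pos L).le (Real.rpow_nonneg htpos.le e)
          _ ≤ B * t ^ e := by
              have h5 : g₁ L * t ^ e * (1 + H) ^ E α
                  ≤ g₁ L * t ^ e * (1 + H) ^ E α * (1 + L) :=
                le_mul_of_one_le_right
                  (mul_nonneg (mul_nonneg (hg₁pos L).le (Real.rpow_nonneg htpos.le e))
                    hHE) (by linarith)
              calc g₁ L * t ^ e * (1 + H) ^ E α
                  ≤ g₁ L * t ^ e * (1 + H) ^ E α * (1 + L) := h5
                _ = B * t ^ e := by rw [hBdef]; ring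
      have hcont : Continuous fun t : ℝ => fαβ x (t•ξ) α β * ξ β :=
        ((hf2 x hx α β).comp (continuous_id.smul continuous_const)).mul continuous_const
      have hint1 : IntervalIntegrable (fun t => |fαβ x (t•ξ) α β * ξ β|) volume 0 1 :=
        hcont.abs.intervalIntegrable 0 1
      have hint2 : IntervalIntegrable (fun t : ℝ => B * t ^ e) volume 0 1 :=
        (intervalIntegral.intervalIntegrable_rpow' he).const_mul B
      have hae : (fun t => |fαβ x (t•ξ) α β * ξ β|)
          ≤ᵐ[volume.restrict (Set.Icc (0:ℝ) 1)] fun t => B * t ^ e := by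
        have h0 : ∀ᵐ t ∂(volume.restrict (Set.Icc (0:ℝ) 1)), t ≠ 0 := by
          rw [MeasureTheory.ae_iff]
          have h1 : {t : ℝ | ¬ t ≠ 0} = {0} := by ext t; simp
          rw [h1, MeasureTheory.Measure.restrict_apply (measurableSet_singleton 0)]
          exact measure_mono_null Set.inter_subset_left (Real.volume_singleton)
        filter_upwards [h0, MeasureTheory.ae_restrict_mem measurableSet_Icc]
          with t ht0 htmem
        exact hpoint t ⟨lt_of_le_of_ne htmem.1 (Ne.symm ht0), htmem.2⟩
      have hcomp : ∫ t in (0:ℝ)..1, |fαβ x (t•ξ) α β * ξ β|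
          ≤ ∫ t in (0:ℝ)..1, B * t ^ e :=
        intervalIntegral.integral_mono_ae_restrict (by norm_num) hint1 hint2 hae
      have hval : ∫ t in (0:ℝ)..1, B * t ^ e = B * (1/(e+1)) := by
        rw [intervalIntegral.integral_const_mul, integral_rpow (Or.inl he)]
        rw [Real.one_rpow, Real.zero_rpow (by linarith : e + 1 ≠ 0)]
        norm_num
      calc |∫ t in (0:ℝ)..1, fαβ x (t•ξ) α β * ξ β|
          ≤ ∫ t in (0:ℝ)..1, |fαβ x (t•ξ) α β * ξ β| := by
            rw [← Real.norm_eq_abs]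
            refine le_of_le_of_eq (intervalIntegral.norm_integral_le_integral_norm
              (by norm_num : (0:ℝ) ≤ 1)) ?_
            simp only [Real.norm_eq_abs]
        _ ≤ B * (1/(e+1)) := hcomp.trans_eq hval
        _ ≤ max 1 (1/(e+1)) * B := by
            rw [mul_comm]
            exact mul_le_mul_of_nonneg_right (le_max_right _ _) hBnn
  choose c hc1 hc2 using key
  set C : ℝ := 1 + ∑ α : ι, ∑ β : ι, c α β with hCdef
  have hcnn : ∀ α β, (0:ℝ) ≤ c α β := fun α β => le_trans zero_le_one (hc1 α β)
  have hCpos : 0 < C := by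
    have h1 : (0:ℝ) ≤ ∑ α : ι, ∑ β : ι, c α β :=
      Finset.sum_nonneg fun α _ => Finset.sum_nonneg fun β _ => hcnn α β
    rw [hCdef]; linarith
  have hCge : ∀ α : ι, (∑ β : ι, c α β) ≤ C := by
    intro α
    rw [hCdef]
    have h1 : (∑ β : ι, c α β) ≤ ∑ a : ι, ∑ β : ι, c a β :=
      Finset.single_le_sum (f := fun a => ∑ β : ι, c a β)
        (fun a _ => Finset.sum_nonneg fun β _ => hcnn a β) (Finset.mem_univ α)
    linarith
  refine ⟨fun t => C * (g₁ t * (1 + max t 0)), fun t => C * (g₁ t * (1 + max t 0)),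
    ⟨?_, ?_, ?_⟩, ⟨?_, ?_, ?_⟩, ?_⟩
  · exact continuous_const.mul (hg₁c.mul (continuous_const.add
      (continuous_id.max continuous_const)))
  · intro t
    have h1 : (0:ℝ) ≤ max t 0 := le_max_right _ _
    exact mul_pos hCpos (mul_pos (hg₁pos t) (by linarith))
  · intro s t hst
    apply mul_le_mul_of_nonneg_left _ hCpos.le
    exact mul_le_mul (hg₁mono hst)
      (add_le_add_right (max_le_max hst le_rfl) 1)
      (by linarith [le_max_right s 0]) (hg₁pos t).le
  · exact continuous_const.mul (hg₁c.mul (continuous_const.add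
      (continuous_id.max continuous_const)))
  · intro t
    have h1 : (0:ℝ) ≤ max t 0 := le_max_right _ _
    exact mul_pos hCpos (mul_pos (hg₁pos t) (by linarith))
  · intro s t hst
    apply mul_le_mul_of_nonneg_left _ hCpos.le
    exact mul_le_mul (hg₁mono hst)
      (add_le_add_right (max_le_max hst le_rfl) 1)
      (by linarith [le_max_right s 0]) (hg₁pos t).le
  intro x hx ξ α
  set L := lowNorm deg m n p ξ with hLdef
  set H := highSum deg m n p pe ξ with hHdef
  have hL : 0 ≤ L := hLnn ξ
  have hH : 0 ≤ H := hHnn ξ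
  have hmaxL : max L 0 = L := max_eq_left hL
  have hderiv : ∀ t ∈ Set.uIcc (0:ℝ) 1, HasDerivAt (fun t : ℝ => fα x (t • ξ) α)
      (∑ β : ι, fαβ x (t • ξ) α β * ξ β) t := by
    intro t _
    have h2 : HasDerivAt (fun s : ℝ => s • ξ) ξ t := by
      simpa using (hasDerivAt_id t).smul_const ξ
    have h1 := (hf1 x hx (t • ξ) α).comp_hasDerivAt t h2
    refine h1.congr_deriv ?_
    exact (ContinuousLinearMap.sum_apply _ _ _).trans rfl
  have hcontsum : Continuous fun t : ℝ => ∑ β : ι, fαβ x (t • ξ) α β * ξ β :=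
    continuous_finset_sum _ fun β _ =>
      ((hf2 x hx α β).comp (continuous_id.smul continuous_const)).mul continuous_const
  have hFTC : fα x ξ α - fα x 0 α = ∫ t in (0:ℝ)..1, ∑ β : ι, fαβ x (t • ξ) α β * ξ β := by
    rw [intervalIntegral.integral_eq_sub_of_hasDerivAt hderiv
      (hcontsum.intervalIntegrable 0 1)]
    simp [one_smul, zero_smul]
  have hsplit : ∫ t in (0:ℝ)..1, ∑ β : ι, fαβ x (t • ξ) α β * ξ β
      = ∑ β : ι, ∫ t in (0:ℝ)..1, fαβ x (t • ξ) α β * ξ β :=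
    intervalIntegral.integral_finset_sum fun β _ =>
      (((hf2 x hx α β).comp (continuous_id.smul continuous_const)).mul
        continuous_const).intervalIntegrable 0 1
  have hgLnn : (0:ℝ) ≤ g₁ L * ((1+L) * (1+H) ^ E α) :=
    mul_nonneg (hg₁pos L).le
      (mul_nonneg (by linarith) (Real.rpow_nonneg (by linarith) _))
  have hmain : |fα x ξ α| ≤ |fα x 0 α| + C * (g₁ L * ((1+L) * (1+H) ^ E α)) := by
    have h1 : |fα x ξ α| - |fα x 0 α| ≤ |fα x ξ α - fα x 0 α| :=
      abs_sub_abs_le_abs_sub _ _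
    have h2 : |fα x ξ α - fα x 0 α| ≤ ∑ β : ι, c α β * (g₁ L * ((1+L) * (1+H) ^ E α)) := by
      rw [hFTC, hsplit]
      refine (Finset.abs_sum_le_sum_abs _ _).trans ?_
      exact Finset.sum_le_sum fun β _ => hc2 α β x hx ξ
    have h3 : ∑ β : ι, c α β * (g₁ L * ((1+L) * (1+H) ^ E α))
        = (∑ β : ι, c α β) * (g₁ L * ((1+L) * (1+H)^E α)) := by
      rw [← Finset.sum_mul]
    have h4 : (∑ β : ι, c α β) * (g₁ L * ((1+L) * (1+H)^E α))
        ≤ C * (g₁ L * ((1+L) * (1+H)^E α)) :=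
      mul_le_mul_of_nonneg_right (hCge α) hgLnn
    linarith
  constructor
  · intro hαlow
    have hEα : E α = 1 := by simp only [hEdef, if_pos hαlow]
    rw [hEα, Real.rpow_one] at hmain
    calc |fα x ξ α| ≤ |fα x 0 α| + C * (g₁ L * ((1+L) * (1+H))) := hmain
      _ = |fα x 0 α| + C * (g₁ L * (1 + max L 0)) * (1+H) := by rw [hmaxL]; ring
  · intro hαhigh
    have hα : ¬ ((deg α:ℝ) < (m:ℝ) - n/p) := not_lt.2 hαhigh
    have hpa := hpegt α hαhigh
    have hEα : E α = 1 - 1/pe α := by simp only [hEdef, if_neg hα]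
    have hq : 1 / qe α = 1 - 1/pe α := by
      rw [hqe2 α hαhigh, one_div_div]
      field_simp
    have hr0 : 0 < 1 - 1/pe α := by
      have h1 : 1/pe α < 1 := by rw [div_lt_one (by linarith)]; linarith
      linarith
    have hr1 : 1 - 1/pe α ≤ 1 := by
      have h1 : 0 < 1/pe α := by positivity
      linarith
    have hrpow : (1+H) ^ E α ≤ 1 + H ^ (1/qe α) := by
      rw [hEα, hq]
      exact aux_one_add_rpow_le hH hr0 hr1
    have hgnn : (0:ℝ) ≤ C * (g₁ L * (1 + L)) :=
      mul_nonneg hCpos.le (mul_nonneg (hg₁pos L).le (by linarith))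
    calc |fα x ξ α| ≤ |fα x 0 α| + C * (g₁ L * ((1+L) * (1+H)^E α)) := hmain
      _ = |fα x 0 α| + (C * (g₁ L * (1+L))) * (1+H)^E α := by ring
      _ ≤ |fα x 0 α| + (C * (g₁ L * (1+L))) * (1 + H ^ (1/qe α)) := by
          have h5 := mul_le_mul_of_nonneg_left hrpow hgnn
          linarith
      _ = |fα x 0 α| + C * (g₁ L * (1 + max L 0))
          + C * (g₁ L * (1 + max L 0)) * H ^ (1/qe α) := by rw [hmaxL]; ring
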